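/- Fix an integer k ≥ 3, d > 0 and β ≥ 0, and let m = ⌈dn/k⌉. There exist constants 0 < c < C and n0 such that for all n ≥ n0: c·2^n·(1 − 2^{1−k}(1 − e^{−β}))^m ≤ E[Z_β(H'_k(n,m))] ≤ C·2^n·(1 − 2^{1−k}(1 − e^{−β}))^m. -/

import Mathlib

noncomputable section

open Finset Filter Real
open scoped Classical BigOperators

/-- The set of all `k`-element subsets of `Fin n` (the potential edges of a
`k`-uniform hypergraph on `[n]`). -/
def kSets (n k : ℕ) : Finset (Finset (Fin n)) :=
  Finset.univ.filter fun e => e.card = k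

/-- An edge is monochromatic under the 2-coloring `σ`. -/
def isMono {n : ℕ} (σ : Fin n → Bool) (e : Finset (Fin n)) : Prop :=
  ∀ v ∈ e, ∀ w ∈ e, σ v = σ w

/-- The number `E_H(σ)` of monochromatic edges of the hypergraph `H` under `σ`. -/
def monoCount {n : ℕ} (H : Finset (Finset (Fin n))) (σ : Fin n → Bool) : ℕ :=
  (H.filter fun e => isMono σ e).card

/-- The partition function `Z_β(H)`. -/
def Zp {n : ℕ} (β : ℝ) (H : Finset (Finset (Fin n))) : ℝ :=
  ∑ τ : Fin n → Bool, Real.exp (-β * (monoCount H τ : ℝ))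

/-- Probability of obtaining the hypergraph `H` in the binomial model `H_k(n,p)`. -/
def probHnp (n k : ℕ) (p : ℝ) (H : Finset (Finset (Fin n))) : ℝ :=
  if H ⊆ kSets n k then p ^ H.card * (1 - p) ^ ((kSets n k).card - H.card) else 0

/-- Expectation of `f` over `H_k(n,p)`. -/
def expHnp (n k : ℕ) (p : ℝ) (f : Finset (Finset (Fin n)) → ℝ) : ℝ :=
  ∑ H : Finset (Finset (Fin n)), probHnp n k p H * f H

/-- Probability of an event under `H_k(n,p)`. -/
def prHnp (n k : ℕ) (p : ℝ) (A : Finset (Finset (Fin n)) → Prop) : ℝ :=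
  expHnp n k p fun H => if A H then 1 else 0

/-- The edge probability `p = d / C(n-1,k-1)`. -/
def pEdge (n k : ℕ) (d : ℝ) : ℝ := d / ((n - 1).choose (k - 1) : ℝ)

/-- The first-moment value `ln 2 + (d/k)·ln(1 − 2^{1−k}(1 − e^{−β}))`. -/
def phiBound (k : ℕ) (d β : ℝ) : ℝ :=
  Real.log 2 + d / k * Real.log (1 - (2:ℝ) ^ ((1:ℤ) - k) * (1 - Real.exp (-β)))

/-- The sequence `n ↦ (1/n)·E[ln Z_β(H_k(n,p))]` with `p = d/C(n-1,k-1)`. -/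
def freeEnergySeq (k : ℕ) (d β : ℝ) (n : ℕ) : ℝ :=
  expHnp n k (pEdge n k d) (fun H => Real.log (Zp β H)) / n

/-- The function `Σ_{k,d}(β)`. -/
def SigmaKD (k : ℕ) (d β : ℝ) : ℝ :=
  (β + 1) * Real.exp (-β + k * Real.log 2) * Real.log 2
    - 2 * (d / k - (2:ℝ) ^ (k - 1) * Real.log 2 + Real.log 2)

/-- `m = ⌈dn/k⌉`. -/
def mOf (d : ℝ) (k n : ℕ) : ℕ := ⌈d * n / (k:ℝ)⌉₊

/-- Number of monochromatic edges, with multiplicity, of a multi-hypergraph given as a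
tuple of `m` edges. -/
def monoCountM {n m : ℕ} (H : Fin m → Finset (Fin n)) (σ : Fin n → Bool) : ℕ :=
  (Finset.univ.filter fun i : Fin m => isMono σ (H i)).card

/-- Partition function of a multi-hypergraph. -/
def ZpM {n m : ℕ} (β : ℝ) (H : Fin m → Finset (Fin n)) : ℝ :=
  ∑ τ : Fin n → Bool, Real.exp (-β * (monoCountM H τ : ℝ))

/-- Expectation over `H'_k(n,m)`: `m` edges chosen uniformly and independently with
replacement from all `k`-subsets of `[n]`. -/
def expHM (n k m : ℕ) (f : (Fin m → Finset (Fin n)) → ℝ) : ℝ :=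
  ∑ H : Fin m → Finset (Fin n),
    (∏ i : Fin m, if H i ∈ kSets n k then ((kSets n k).card : ℝ)⁻¹ else 0) * f H

/-- Probability of `H` under `H_k(n,m)`: `m` distinct edges chosen uniformly without
replacement. -/
def probHnm (n k m : ℕ) (H : Finset (Finset (Fin n))) : ℝ :=
  if H ⊆ kSets n k ∧ H.card = m then ((kSets n k).card.choose m : ℝ)⁻¹ else 0

/-- Expectation of `f` over `H_k(n,m)`. -/
def expHnm (n k m : ℕ) (f : Finset (Finset (Fin n)) → ℝ) : ℝ :=
  ∑ H : Finset (Finset (Fin n)), probHnm n k m H * f H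

/-- Number of vertices with color `true` (i.e. `|σ⁻¹(1)|`). -/
def numPlus {n : ℕ} (σ : Fin n → Bool) : ℕ :=
  (Finset.univ.filter fun v => σ v = true).card

/-- A coloring is balanced if `||σ⁻¹(1)| − n/2| ≤ √n`. -/
def isBalanced {n : ℕ} (σ : Fin n → Bool) : Prop :=
  |(numPlus σ : ℝ) - n / 2| ≤ Real.sqrt n

/-- The overlap `⟨σ,τ⟩ = ∑_v σ(v)τ(v)`. -/
def overlap {n : ℕ} (σ τ : Fin n → Bool) : ℤ :=
  ∑ _v ∈ Finset.univ.filter (fun v : Fin n => σ v = τ v), (1:ℤ) +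
    ∑ _v ∈ Finset.univ.filter (fun v : Fin n => σ v ≠ τ v), (-1:ℤ)

/-- The cluster size `C_β(H,σ)`. -/
def clusterSize {n : ℕ} (β : ℝ) (H : Finset (Finset (Fin n))) (σ : Fin n → Bool) : ℝ :=
  ∑ τ : Fin n → Bool,
    if 2 * (n:ℝ) / 3 ≤ (overlap σ τ : ℝ) then Real.exp (-β * (monoCount H τ : ℝ)) else 0

/-- The entropy function `H(z)`. -/
def entH (z : ℝ) : ℝ := -z * Real.log z - (1 - z) * Real.log (1 - z)

/-- The second-moment exponent `Λ_β(α)`. -/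
def Lam (k : ℕ) (d β α : ℝ) : ℝ :=
  entH ((1 + α) / 2) +
    d / k * Real.log (1 - (2:ℝ) ^ ((1:ℤ) - k) * (1 - Real.exp (-β)) *
      (2 - (1 - Real.exp (-β)) * ((1 + α) ^ k + (1 - α) ^ k) / 2 ^ k))

/-- The pair partition function `Z_β(α)` with `α = 2ν/n − 1`, i.e. overlap `2ν − n`. -/
def Zpair {n m : ℕ} (β : ℝ) (ν : ℕ) (H : Fin m → Finset (Fin n)) : ℝ :=
  ∑ σ : Fin n → Bool, ∑ τ : Fin n → Bool,
    if isBalanced σ ∧ isBalanced τ ∧ overlap σ τ = 2 * (ν:ℤ) - (n:ℤ) then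
      Real.exp (-β * ((monoCountM H σ : ℝ) + (monoCountM H τ : ℝ)))
    else 0

/-- Partition function of a multi-hypergraph restricted to balanced colorings. -/
def ZpMbal {n m : ℕ} (β : ℝ) (H : Fin m → Finset (Fin n)) : ℝ :=
  ∑ τ : Fin n → Bool,
    if isBalanced τ then Real.exp (-β * (monoCountM H τ : ℝ)) else 0

/-- `m₀ = 2^{1−k}·e^{−β}·m/(1 − 2^{1−k}(1 − e^{−β}))`. -/
def m0Of (k : ℕ) (β : ℝ) (m : ℕ) : ℝ :=
  (2:ℝ) ^ ((1:ℤ) - k) * Real.exp (-β) * m / (1 - (2:ℝ) ^ ((1:ℤ) - k) * (1 - Real.exp (-β)))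

/-- The probability `p₁` of a monochromatic edge in the planted model. -/
def p1Planted (n k : ℕ) (d β : ℝ) : ℝ :=
  Real.exp (-β) * d /
    ((1 - (2:ℝ) ^ ((1:ℤ) - k) * (1 - Real.exp (-β))) * ((n - 1).choose (k - 1) : ℝ))

/-- The probability `p₂` of a bichromatic edge in the planted model. -/
def p2Planted (n k : ℕ) (d β : ℝ) : ℝ :=
  d / ((1 - (2:ℝ) ^ ((1:ℤ) - k) * (1 - Real.exp (-β))) * ((n - 1).choose (k - 1) : ℝ))

/-- Conditional probability of the hypergraph `H` in the planted model given the planted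
coloring `σ`: monochromatic edges appear with probability `q1`, bichromatic ones with `q2`. -/
def probPlanted (n k : ℕ) (q1 q2 : ℝ) (σ : Fin n → Bool)
    (H : Finset (Finset (Fin n))) : ℝ :=
  if H ⊆ kSets n k then
    (∏ e ∈ (kSets n k).filter (fun e => isMono σ e), if e ∈ H then q1 else 1 - q1) *
      ∏ e ∈ (kSets n k).filter (fun e => ¬ isMono σ e), if e ∈ H then q2 else 1 - q2
  else 0

/-- Probability of an event in the planted model `(σ̂, G)`. -/
def prPlanted (n k : ℕ) (q1 q2 : ℝ)
    (A : (Fin n → Bool) → Finset (Finset (Fin n)) → Prop) : ℝ :=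
  ∑ σ : Fin n → Bool, ∑ H : Finset (Finset (Fin n)),
    ((2:ℝ)⁻¹) ^ n * probPlanted n k q1 q2 σ H * (if A σ H then 1 else 0)

/-- `β_crit(d,k)`, as an extended real (so `⊤ = ∞` if the set is empty). -/
def betaCrit (k : ℕ) (d : ℝ) : EReal :=
  sInf ((fun β : ℝ => (β : EReal)) ''
    {β : ℝ | 0 < β ∧ limsup (freeEnergySeq k d β) atTop < phiBound k d β})

/-- `v` supports the edge `e`: `v ∈ e` and every other vertex of `e` has color `−σ(v)`. -/
def supportsEdge {n : ℕ} (σ : Fin n → Bool) (v : Fin n) (e : Finset (Fin n)) : Prop :=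
  v ∈ e ∧ ∀ w ∈ e, w ≠ v → σ w = !(σ v)

/-- An edge `e` is `U`-endangered: all vertices of `U ∩ e` have the same color. -/
def endangered {n : ℕ} (σ : Fin n → Bool) (U : Finset (Fin n)) (e : Finset (Fin n)) : Prop :=
  ∀ v ∈ U ∩ e, ∀ w ∈ U ∩ e, σ v = σ w

/-- A set `V'` satisfying the two core conditions CR1 and CR2. -/
def goodSet {n : ℕ} (H : Finset (Finset (Fin n))) (σ : Fin n → Bool)
    (V' : Finset (Fin n)) : Prop :=
  (∀ v ∈ V', 100 ≤ (H.filter fun e => supportsEdge σ v e ∧ e ⊆ V').card) ∧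
    ∀ v ∈ V', (H.filter fun e => v ∈ e ∧ endangered σ V' e).card ≤ 10

/-- The core: the largest set satisfying CR1 and CR2 (the union of all such sets). -/
def coreSet {n : ℕ} (H : Finset (Finset (Fin n))) (σ : Fin n → Bool) : Finset (Fin n) :=
  Finset.univ.filter fun v => ∃ V', goodSet H σ V' ∧ v ∈ V'

/-- The backbone: vertices outside the core supporting an edge into the core and occurring
in no `({v} ∪ core)`-endangered edge. -/
def backboneSet {n : ℕ} (H : Finset (Finset (Fin n))) (σ : Fin n → Bool) : Finset (Fin n) :=
  Finset.univ.filter fun v => v ∉ coreSet H σ ∧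
    (∃ e ∈ H, supportsEdge σ v e ∧ e \ {v} ⊆ coreSet H σ) ∧
    ∀ e ∈ H, v ∈ e → ¬ endangered σ (insert v (coreSet H σ)) e

/-- The remaining vertices. -/
def restSet {n : ℕ} (H : Finset (Finset (Fin n))) (σ : Fin n → Bool) : Finset (Fin n) :=
  Finset.univ \ (coreSet H σ ∪ backboneSet H σ)

/-- The free vertices: vertices of the rest all of whose edges meet the core in a
bichromatic set. -/
def freeSet {n : ℕ} (H : Finset (Finset (Fin n))) (σ : Fin n → Bool) : Finset (Fin n) :=
  (restSet H σ).filter fun v => ∀ e ∈ H, v ∈ e →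
    ∃ w1 ∈ e ∩ coreSet H σ, ∃ w2 ∈ e ∩ coreSet H σ, σ w1 ≠ σ w2

namespace S5

lemma card_kSets (n k : ℕ) : (kSets n k).card = n.choose k := by
  have : kSets n k = Finset.powersetCard k Finset.univ := by
    ext e; simp [kSets, Finset.mem_powersetCard]
  rw [this, Finset.card_powersetCard, Finset.card_univ, Fintype.card_fin]

lemma count_mono_le {n k : ℕ} (hk : 0 < k) (e : Finset (Fin n)) (he : e.card = k) :
    (Finset.univ.filter fun τ : Fin n → Bool => isMono τ e).card ≤ 2 ^ (n - k + 1) := by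
  obtain ⟨v0, hv0⟩ : e.Nonempty := Finset.card_pos.mp (he ▸ hk)
  set φ : (Fin n → Bool) → Bool × ({x : Fin n // x ∉ e} → Bool) :=
    fun τ => (τ v0, fun x => τ x.1) with hφ
  have hinj : Set.InjOn φ (Finset.univ.filter fun τ : Fin n → Bool => isMono τ e) := ?_
  · have hcard : (Finset.univ.filter fun τ : Fin n → Bool => isMono τ e).card
        ≤ (Finset.univ : Finset (Bool × ({x : Fin n // x ∉ e} → Bool))).card :=
      Finset.card_le_card_of_injOn φ (fun a _ => Finset.mem_univ (φ a)) hinj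
    rw [Finset.card_univ, Fintype.card_prod, Fintype.card_bool, Fintype.card_fun,
      Fintype.card_bool] at hcard
    have hsub : Fintype.card {x : Fin n // x ∉ e} = n - k := by
      rw [Fintype.card_subtype_compl, Fintype.card_coe, Fintype.card_fin, he]
    rw [hsub] at hcard
    calc (Finset.univ.filter fun τ : Fin n → Bool => isMono τ e).card
        ≤ 2 * 2 ^ (n - k) := hcard
      _ = 2 ^ (n - k + 1) := by ring
  · intro τ1 h1 τ2 h2 heq
    simp only [Finset.coe_filter, Set.mem_setOf_eq, Finset.mem_univ, true_and] at h1 h2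
    funext x
    by_cases hx : x ∈ e
    · have e1 : τ1 x = τ1 v0 := h1 x hx v0 hv0
      have e2 : τ2 x = τ2 v0 := h2 x hx v0 hv0
      have hv : τ1 v0 = τ2 v0 := congrArg Prod.fst heq
      rw [e1, e2, hv]
    · exact congrFun (congrArg Prod.snd heq) ⟨x, hx⟩

lemma sum_monoCount_le (n k : ℕ) (hk : 0 < k) :
    ∑ τ : Fin n → Bool, monoCount (kSets n k) τ ≤ (kSets n k).card * 2 ^ (n - k + 1) := by
  have h1 : ∀ τ : Fin n → Bool, monoCount (kSets n k) τ
      = ∑ e ∈ kSets n k, if isMono τ e then 1 else 0 := by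
    intro τ; rw [monoCount, Finset.card_filter]
  calc ∑ τ : Fin n → Bool, monoCount (kSets n k) τ
      = ∑ τ : Fin n → Bool, ∑ e ∈ kSets n k, if isMono τ e then 1 else 0 := by
        exact Finset.sum_congr rfl fun τ _ => h1 τ
    _ = ∑ e ∈ kSets n k, ∑ τ : Fin n → Bool, if isMono τ e then 1 else 0 :=
        Finset.sum_comm
    _ = ∑ e ∈ kSets n k, (Finset.univ.filter fun τ : Fin n → Bool => isMono τ e).card := by
        refine Finset.sum_congr rfl fun e _ => ?_
        rw [Finset.card_filter]
    _ ≤ ∑ e ∈ kSets n k, 2 ^ (n - k + 1) := by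
        refine Finset.sum_le_sum fun e hee => ?_
        have he : e.card = k := by simpa [kSets] using hee
        exact count_mono_le hk e he
    _ = (kSets n k).card * 2 ^ (n - k + 1) := by rw [Finset.sum_const, smul_eq_mul]

lemma monoCount_ge (n k : ℕ) (hk : 0 < k) (τ : Fin n → Bool) :
    (numPlus τ).choose k + (n - numPlus τ).choose k ≤ monoCount (kSets n k) τ := by
  set T : Finset (Fin n) := Finset.univ.filter (fun v => τ v = true) with hT
  set F : Finset (Fin n) := Finset.univ.filter (fun v => ¬ τ v = true) with hF
  have hTc : T.card = numPlus τ := rfl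
  have hFc : F.card = n - numPlus τ := by
    have := Finset.card_filter_add_card_filter_not (s := Finset.univ)
      (p := fun v : Fin n => τ v = true)
    rw [Finset.card_univ, Fintype.card_fin] at this
    have h2 : numPlus τ = (Finset.univ.filter (fun v : Fin n => τ v = true)).card := rfl
    rw [hF]
    omega
  have hsub : Finset.powersetCard k T ∪ Finset.powersetCard k F
      ⊆ (kSets n k).filter fun e => isMono τ e := by
    intro e hee
    rw [Finset.mem_union] at hee
    rcases hee with h | h <;> rw [Finset.mem_powersetCard] at h <;>
      rw [Finset.mem_filter] <;>
      refine ⟨by simp [kSets, h.2], fun v hv w hw => ?_⟩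
    · have h1 : τ v = true := by have := h.1 hv; rw [hT, Finset.mem_filter] at this; exact this.2
      have h2 : τ w = true := by have := h.1 hw; rw [hT, Finset.mem_filter] at this; exact this.2
      rw [h1, h2]
    · have h1 : ¬ τ v = true := by have := h.1 hv; rw [hF, Finset.mem_filter] at this; exact this.2
      have h2 : ¬ τ w = true := by have := h.1 hw; rw [hF, Finset.mem_filter] at this; exact this.2
      simp only [Bool.not_eq_true] at h1 h2
      rw [h1, h2]
  have hdisj : Disjoint (Finset.powersetCard k T) (Finset.powersetCard k F) := by
    rw [Finset.disjoint_left]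
    intro e he1 he2
    rw [Finset.mem_powersetCard] at he1 he2
    obtain ⟨v, hv⟩ : e.Nonempty := Finset.card_pos.mp (he1.2 ▸ hk)
    have h1 := he1.1 hv
    have h2 := he2.1 hv
    rw [hT, Finset.mem_filter] at h1
    rw [hF, Finset.mem_filter] at h2
    exact h2.2 h1.2
  have := Finset.card_le_card hsub
  rw [Finset.card_union_of_disjoint hdisj, Finset.card_powersetCard,
    Finset.card_powersetCard, hTc, hFc] at this
  exact this

end S5

namespace S5

lemma two_zpow_eq {k : ℕ} (hk : 3 ≤ k) :
    (2:ℝ) ^ ((1:ℤ) - k) = ((2:ℝ) ^ (k - 1 : ℕ))⁻¹ := by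
  rw [← zpow_natCast (2:ℝ) (k-1), ← zpow_neg]
  congr 1
  omega

lemma pow_mean_two {x y : ℝ} (hx : 0 ≤ x) (hy : 0 ≤ y) {k : ℕ} (hk : 1 ≤ k) :
    (x + y) ^ k ≤ 2 ^ (k - 1) * (x ^ k + y ^ k) := by
  obtain ⟨j, rfl⟩ : ∃ j, k = j + 1 := ⟨k - 1, by omega⟩
  have h := pow_sum_div_card_le_sum_pow (s := (Finset.univ : Finset (Fin 2)))
      (f := ![x, y]) (fun i _ => by fin_cases i <;> simpa) j
  simp only [Fin.sum_univ_two, Matrix.cons_val_zero, Matrix.cons_val_one, Matrix.head_cons,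
    Finset.card_univ, Fintype.card_fin] at h
  rw [div_le_iff₀ (by positivity)] at h
  have hj : j + 1 - 1 = j := by omega
  rw [hj]
  calc (x + y) ^ (j+1) ≤ (x ^ (j+1) + y ^ (j+1)) * (2:ℝ) ^ j := h
    _ = 2 ^ j * (x ^ (j+1) + y ^ (j+1)) := by ring

lemma choose_lower {k n a b : ℕ} (hk : 3 ≤ k) (hn : 2 * k ≤ n) (hab : a + b = n) :
    (2:ℝ) ^ ((1:ℤ) - k) * (1 - 2 * k ^ 2 / n) * (n.choose k : ℝ)
      ≤ (a.choose k : ℝ) + (b.choose k : ℝ) := by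
  have hn0 : (0:ℝ) < n := by
    have : 0 < n := by omega
    exact_mod_cast this
  have h2pos : (0:ℝ) < (2:ℝ) ^ ((1:ℤ) - k) := zpow_pos (by norm_num) _
  by_cases ht : (1 - 2 * (k:ℝ) ^ 2 / n) ≤ 0
  · have h1 : (2:ℝ) ^ ((1:ℤ) - k) * (1 - 2 * (k:ℝ) ^ 2 / n) * (n.choose k : ℝ) ≤ 0 := by
      apply mul_nonpos_of_nonpos_of_nonneg
      · exact mul_nonpos_of_nonneg_of_nonpos h2pos.le ht
      · positivity
    have h2 : (0:ℝ) ≤ (a.choose k : ℝ) + (b.choose k : ℝ) := by positivity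
    linarith
  push_neg at ht
  set x := a + 1 - k with hx
  set y := b + 1 - k with hy
  have hxy : (n:ℝ) - 2*k ≤ (x:ℝ) + y := by
    have h1 : n + 2 ≤ x + y + 2*k := by omega
    have h2 := (Nat.cast_le (α := ℝ)).mpr h1
    push_cast at h2
    linarith
  have hda : ((x:ℝ))^k ≤ (a.descFactorial k : ℝ) := by
    exact_mod_cast Nat.pow_sub_le_descFactorial a k
  have hdb : ((y:ℝ))^k ≤ (b.descFactorial k : ℝ) := by
    exact_mod_cast Nat.pow_sub_le_descFactorial b k
  have hdn : ((n.descFactorial k : ℝ)) ≤ (n:ℝ)^k := by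
    exact_mod_cast Nat.descFactorial_le_pow n k
  have hkn : (k:ℝ) ≤ n := by
    have : k ≤ n := by omega
    exact_mod_cast this
  have hnk : (0:ℝ) ≤ (n:ℝ) - 2*k := by
    have h1 : 2*k ≤ n := hn
    have h2 := (Nat.cast_le (α := ℝ)).mpr h1
    push_cast at h2
    linarith
  have hBer : (1 - 2*(k:ℝ)^2/n) * (n:ℝ)^k ≤ ((n:ℝ) - 2*k)^k := by
    have hm2 : (-2:ℝ) ≤ -(2*(k:ℝ)/n) := by
      rw [neg_le_neg_iff, div_le_iff₀ hn0]
      linarith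
    have h1 : (1:ℝ) + k * (-(2*(k:ℝ)/n)) ≤ (1 + (-(2*(k:ℝ)/n)))^k := one_add_mul_le_pow hm2 k
    have h2 : ((1 + (-(2*(k:ℝ)/n)))^k) * (n:ℝ)^k = ((n:ℝ) - 2*k)^k := by
      rw [← mul_pow]
      congr 1
      field_simp
      ring
    have h3 : (1:ℝ) + k * (-(2*(k:ℝ)/n)) = 1 - 2*(k:ℝ)^2/n := by ring
    have hnkpos : (0:ℝ) ≤ (n:ℝ)^k := by positivity
    nlinarith [mul_le_mul_of_nonneg_right h1 hnkpos]
  have hKf : (0:ℝ) < (k.factorial : ℝ) := by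
    exact_mod_cast Nat.factorial_pos k
  rw [← mul_le_mul_iff_right₀ hKf]
  have hca : (k.factorial : ℝ) * (a.choose k : ℝ) = (a.descFactorial k : ℝ) := by
    exact_mod_cast (Nat.descFactorial_eq_factorial_mul_choose a k).symm
  have hcb : (k.factorial : ℝ) * (b.choose k : ℝ) = (b.descFactorial k : ℝ) := by
    exact_mod_cast (Nat.descFactorial_eq_factorial_mul_choose b k).symm
  have hcn : (k.factorial : ℝ) * (n.choose k : ℝ) = (n.descFactorial k : ℝ) := by
    exact_mod_cast (Nat.descFactorial_eq_factorial_mul_choose n k).symm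
  have step1 : (2:ℝ) ^ ((1:ℤ) - k) * (1 - 2*(k:ℝ)^2/n) * (n.descFactorial k : ℝ)
      ≤ (2:ℝ) ^ ((1:ℤ) - k) * (((n:ℝ) - 2*k)^k) := by
    have := mul_le_mul_of_nonneg_left hdn ht.le
    have h2 := mul_le_mul_of_nonneg_left (this.trans hBer) h2pos.le
    calc (2:ℝ) ^ ((1:ℤ) - k) * (1 - 2*(k:ℝ)^2/n) * (n.descFactorial k : ℝ)
        = (2:ℝ) ^ ((1:ℤ) - k) * ((1 - 2*(k:ℝ)^2/n) * (n.descFactorial k : ℝ)) := by ring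
      _ ≤ (2:ℝ) ^ ((1:ℤ) - k) * (((n:ℝ) - 2*k)^k) := h2
  have step2 : (((n:ℝ) - 2*k)^k) ≤ ((x:ℝ) + y)^k :=
    pow_le_pow_left₀ hnk hxy k
  have step3 : ((x:ℝ) + y)^k ≤ 2 ^ (k-1) * ((x:ℝ)^k + (y:ℝ)^k) :=
    pow_mean_two (by positivity) (by positivity) (by omega)
  have hzz : (2:ℝ) ^ ((1:ℤ) - k) * (2:ℝ) ^ (k-1 : ℕ) = 1 := by
    rw [two_zpow_eq hk]
    field_simp
  calc (k.factorial : ℝ) * ((2:ℝ) ^ ((1:ℤ) - k) * (1 - 2*(k:ℝ)^2/n) * (n.choose k : ℝ))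
      = (2:ℝ) ^ ((1:ℤ) - k) * (1 - 2*(k:ℝ)^2/n) * ((k.factorial : ℝ) * (n.choose k : ℝ)) := by
        ring
    _ = (2:ℝ) ^ ((1:ℤ) - k) * (1 - 2*(k:ℝ)^2/n) * (n.descFactorial k : ℝ) := by rw [hcn]
    _ ≤ (2:ℝ) ^ ((1:ℤ) - k) * (((n:ℝ) - 2*k)^k) := step1
    _ ≤ (2:ℝ) ^ ((1:ℤ) - k) * (((x:ℝ) + y)^k) := by
        exact mul_le_mul_of_nonneg_left step2 h2pos.le
    _ ≤ (2:ℝ) ^ ((1:ℤ) - k) * (2 ^ (k-1) * ((x:ℝ)^k + (y:ℝ)^k)) :=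
        mul_le_mul_of_nonneg_left step3 h2pos.le
    _ = ((x:ℝ)^k + (y:ℝ)^k) := by rw [← mul_assoc, hzz, one_mul]
    _ ≤ (a.descFactorial k : ℝ) + (b.descFactorial k : ℝ) := by linarith
    _ = (k.factorial : ℝ) * ((a.choose k : ℝ) + (b.choose k : ℝ)) := by
        rw [mul_add, hca, hcb]

end S5

namespace S5

lemma exp_prod {n m : ℕ} (β : ℝ) (H : Fin m → Finset (Fin n)) (τ : Fin n → Bool) :
    Real.exp (-β * (monoCountM H τ : ℝ)) =
      ∏ i : Fin m, (if isMono τ (H i) then Real.exp (-β) else 1) := by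
  rw [monoCountM, Finset.card_filter]
  push_cast
  rw [Finset.mul_sum, Real.exp_sum]
  refine Finset.prod_congr rfl fun i _ => ?_
  by_cases h : isMono τ (H i)
  · simp [h]
  · simp [h]

lemma expHM_eq (n k m : ℕ) (β : ℝ) :
    expHM n k m (ZpM β) = ∑ τ : Fin n → Bool,
      (∑ e : Finset (Fin n), (if e ∈ kSets n k then ((kSets n k).card : ℝ)⁻¹ else 0) *
        (if isMono τ e then Real.exp (-β) else 1)) ^ m := by
  unfold expHM ZpM
  have step1 : ∀ H : Fin m → Finset (Fin n),
      (∏ i : Fin m, if H i ∈ kSets n k then ((kSets n k).card : ℝ)⁻¹ else 0) *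
        (∑ τ : Fin n → Bool, Real.exp (-β * (monoCountM H τ : ℝ)))
      = ∑ τ : Fin n → Bool, ∏ i : Fin m,
          ((if H i ∈ kSets n k then ((kSets n k).card : ℝ)⁻¹ else 0) *
            (if isMono τ (H i) then Real.exp (-β) else 1)) := by
    intro H
    rw [Finset.mul_sum]
    refine Finset.sum_congr rfl fun τ _ => ?_
    rw [exp_prod β H τ, ← Finset.prod_mul_distrib]
  calc (∑ H : Fin m → Finset (Fin n),
        (∏ i : Fin m, if H i ∈ kSets n k then ((kSets n k).card : ℝ)⁻¹ else 0) *
          ∑ τ : Fin n → Bool, Real.exp (-β * (monoCountM H τ : ℝ)))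
      = ∑ H : Fin m → Finset (Fin n), ∑ τ : Fin n → Bool, ∏ i : Fin m,
          ((if H i ∈ kSets n k then ((kSets n k).card : ℝ)⁻¹ else 0) *
            (if isMono τ (H i) then Real.exp (-β) else 1)) :=
        Finset.sum_congr rfl fun H _ => step1 H
    _ = ∑ τ : Fin n → Bool, ∑ H : Fin m → Finset (Fin n), ∏ i : Fin m,
          ((if H i ∈ kSets n k then ((kSets n k).card : ℝ)⁻¹ else 0) *
            (if isMono τ (H i) then Real.exp (-β) else 1)) := Finset.sum_comm
    _ = ∑ τ : Fin n → Bool,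
          (∑ e : Finset (Fin n), (if e ∈ kSets n k then ((kSets n k).card : ℝ)⁻¹ else 0) *
            (if isMono τ e then Real.exp (-β) else 1)) ^ m := by
        refine Finset.sum_congr rfl fun τ _ => Eq.symm ?_
        have h1 : (∑ e : Finset (Fin n),
            (if e ∈ kSets n k then ((kSets n k).card : ℝ)⁻¹ else 0) *
              (if isMono τ e then Real.exp (-β) else 1)) ^ m
            = ∏ _i : Fin m, (∑ e : Finset (Fin n),
              (if e ∈ kSets n k then ((kSets n k).card : ℝ)⁻¹ else 0) *
                (if isMono τ e then Real.exp (-β) else 1)) := by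
          rw [Finset.prod_const, Finset.card_univ, Fintype.card_fin]
        rw [h1, Finset.prod_univ_sum, Fintype.piFinset_univ]

end S5

namespace S5

lemma inner_sum_eq (n k : ℕ) (hN : 0 < (kSets n k).card) (β : ℝ) (τ : Fin n → Bool) :
    ∑ e : Finset (Fin n), (if e ∈ kSets n k then ((kSets n k).card : ℝ)⁻¹ else 0) *
        (if isMono τ e then Real.exp (-β) else 1)
      = 1 - (1 - Real.exp (-β)) * (monoCount (kSets n k) τ : ℝ) / ((kSets n k).card : ℝ) := by
  have hNR : (0:ℝ) < ((kSets n k).card : ℝ) := by exact_mod_cast hN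
  have h1 : ∀ e : Finset (Fin n),
      (if e ∈ kSets n k then ((kSets n k).card : ℝ)⁻¹ else 0) *
        (if isMono τ e then Real.exp (-β) else 1)
      = if e ∈ kSets n k then
          ((kSets n k).card : ℝ)⁻¹ *
            (1 - (1 - Real.exp (-β)) * (if isMono τ e then 1 else 0))
        else 0 := by
    intro e
    by_cases he : e ∈ kSets n k <;> by_cases hm : isMono τ e <;> simp [he, hm] <;> ring
  rw [Finset.sum_congr rfl fun e _ => h1 e, Finset.sum_ite_mem, Finset.univ_inter,
    ← Finset.mul_sum]
  have h2 : ∑ e ∈ kSets n k, (1 - (1 - Real.exp (-β)) * (if isMono τ e then (1:ℝ) else 0))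
      = ((kSets n k).card : ℝ) - (1 - Real.exp (-β)) * (monoCount (kSets n k) τ : ℝ) := by
    rw [Finset.sum_sub_distrib, Finset.sum_const, ← Finset.mul_sum, nsmul_eq_mul, mul_one]
    congr 2
    rw [monoCount, Finset.card_filter]
    push_cast
    rfl
  rw [h2]
  field_simp

end S5

set_option maxHeartbeats 1000000 in
theorem statement_5 (k : ℕ) (hk : 3 ≤ k) (d β : ℝ) (hd : 0 < d) (hβ : 0 ≤ β) :
    ∃ c C : ℝ, 0 < c ∧ c < C ∧ ∃ n0 : ℕ, ∀ n : ℕ, n0 ≤ n →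
      c * 2 ^ n * (1 - (2:ℝ) ^ ((1:ℤ) - k) * (1 - Real.exp (-β))) ^ mOf d k n
          ≤ expHM n k (mOf d k n) (ZpM β) ∧
        expHM n k (mOf d k n) (ZpM β)
          ≤ C * 2 ^ n * (1 - (2:ℝ) ^ ((1:ℤ) - k) * (1 - Real.exp (-β))) ^ mOf d k n := by
  have hexp0 : 0 < Real.exp (-β) := Real.exp_pos _
  have hexp1 : Real.exp (-β) ≤ 1 := by
    have := Real.exp_le_exp.mpr (show -β ≤ 0 by linarith)
    simpa using this
  set lam : ℝ := 1 - Real.exp (-β) with hlam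
  have hlam0 : 0 ≤ lam := by simp [hlam]; linarith
  have hlam1 : lam ≤ 1 := by simp [hlam]; linarith
  have h2z : (0:ℝ) < (2:ℝ) ^ ((1:ℤ) - k) := zpow_pos (by norm_num) _
  have h2quarter : (2:ℝ) ^ ((1:ℤ) - k) ≤ 1/4 := by
    rw [S5.two_zpow_eq hk]
    have h4 : (4:ℝ) ≤ 2 ^ (k - 1 : ℕ) := by
      calc (4:ℝ) = 2 ^ (2:ℕ) := by norm_num
        _ ≤ 2 ^ (k - 1 : ℕ) := pow_le_pow_right₀ (by norm_num) (by omega)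
    rw [show (1:ℝ)/4 = ((4:ℝ))⁻¹ by norm_num]
    exact inv_anti₀ (by norm_num) h4
  set A : ℝ := 1 - (2:ℝ) ^ ((1:ℤ) - k) * lam with hA
  have hA34 : 3/4 ≤ A := by
    have : (2:ℝ) ^ ((1:ℤ) - k) * lam ≤ (1/4) * 1 :=
      mul_le_mul h2quarter hlam1 hlam0 (by norm_num)
    simp only [hA]; linarith
  have hA1 : A ≤ 1 := by
    have : 0 ≤ (2:ℝ) ^ ((1:ℤ) - k) * lam := mul_nonneg h2z.le hlam0
    simp only [hA]; linarith
  refine ⟨1/2, Real.exp ((d+1)*3*k^2) + 1, by norm_num, ?_, 2*k+2, ?_⟩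
  · have : 1 ≤ Real.exp ((d+1)*3*k^2) := Real.one_le_exp (by positivity)
    linarith
  intro n hn
  have hkn : k ≤ n := by omega
  have hn1 : 1 ≤ n := by omega
  have hnR : (0:ℝ) < n := by exact_mod_cast show 0 < n by omega
  have hN : 0 < (kSets n k).card := by
    rw [S5.card_kSets]; exact Nat.choose_pos hkn
  have hNR : (0:ℝ) < ((kSets n k).card : ℝ) := by exact_mod_cast hN
  set m := mOf d k n with hm
  have hm1 : 1 ≤ m := by
    rw [hm, mOf]
    refine Nat.ceil_pos.mpr ?_
    have hk0 : (0:ℝ) < k := by positivity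
    positivity
  have hmle : (m:ℝ) ≤ (d+1) * n := by
    have h0 : (0:ℝ) ≤ d * n / k := by positivity
    have hceil := Nat.ceil_lt_add_one h0
    have hk1 : (1:ℝ) ≤ k := by
      have : 1 ≤ k := by omega
      exact_mod_cast this
    have hdn : d * n / k ≤ d * n := by
      rw [div_le_iff₀ (by linarith)]
      nlinarith [mul_nonneg (mul_nonneg hd.le hnR.le) (show (0:ℝ) ≤ (k:ℝ) - 1 by linarith)]
    have hn1R : (1:ℝ) ≤ n := by exact_mod_cast hn1
    have : (m:ℝ) < d * n / k + 1 := hceil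
    nlinarith
  set f : (Fin n → Bool) → ℝ :=
    fun τ => 1 - lam * (monoCount (kSets n k) τ : ℝ) / ((kSets n k).card : ℝ) with hf
  have hid : expHM n k m (ZpM β) = ∑ τ : Fin n → Bool, f τ ^ m := by
    rw [S5.expHM_eq n k m β]
    exact Finset.sum_congr rfl fun τ _ => by rw [S5.inner_sum_eq n k hN β τ]
  have hcard : ((Finset.univ : Finset (Fin n → Bool)).card : ℝ) = 2 ^ n := by
    simp
  -- pointwise bounds
  have hq01 : ∀ τ : Fin n → Bool, 0 ≤ (monoCount (kSets n k) τ : ℝ) / ((kSets n k).card : ℝ)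
      ∧ (monoCount (kSets n k) τ : ℝ) / ((kSets n k).card : ℝ) ≤ 1 := by
    intro τ
    constructor
    · positivity
    · rw [div_le_one hNR]
      exact_mod_cast Finset.card_filter_le _ _
  have hf0 : ∀ τ : Fin n → Bool, 0 ≤ f τ := by
    intro τ
    obtain ⟨hq0, hq1⟩ := hq01 τ
    have : lam * ((monoCount (kSets n k) τ : ℝ) / ((kSets n k).card : ℝ)) ≤ 1 :=
      mul_le_one₀ hlam1 hq0 hq1
    simp only [hf]
    rw [mul_div_assoc]
    linarith
  have hqlb : ∀ τ : Fin n → Bool,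
      (2:ℝ) ^ ((1:ℤ) - k) * (1 - 2 * k ^ 2 / n)
        ≤ (monoCount (kSets n k) τ : ℝ) / ((kSets n k).card : ℝ) := by
    intro τ
    rw [le_div_iff₀ hNR]
    have hnp : numPlus τ ≤ n := by
      have := Finset.card_filter_le (Finset.univ : Finset (Fin n)) (fun v => τ v = true)
      rwa [Finset.card_univ, Fintype.card_fin] at this
    have h1 := S5.choose_lower (n := n) (a := numPlus τ) (b := n - numPlus τ) hk (by omega) (by omega)
    have h2 := S5.monoCount_ge n k (by omega) τ
    have h2R : ((numPlus τ).choose k : ℝ) + ((n - numPlus τ).choose k : ℝ)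
        ≤ (monoCount (kSets n k) τ : ℝ) := by exact_mod_cast h2
    rw [S5.card_kSets]
    linarith
  have hfub : ∀ τ : Fin n → Bool, f τ ≤ A + 2 * k ^ 2 / n := by
    intro τ
    have h1 := mul_le_mul_of_nonneg_left (hqlb τ) hlam0
    have h2 : lam * ((2:ℝ) ^ ((1:ℤ) - k) * (1 - 2 * k ^ 2 / n))
        = lam * (2:ℝ) ^ ((1:ℤ) - k) - lam * (2:ℝ) ^ ((1:ℤ) - k) * (2 * k ^ 2 / n) := by
      ring
    have h3 : lam * (2:ℝ) ^ ((1:ℤ) - k) ≤ 1 := by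
      have := mul_le_mul hlam1 h2quarter h2z.le (by norm_num : (0:ℝ) ≤ 1)
      linarith
    have h4 : (0:ℝ) ≤ 2 * k ^ 2 / n := by positivity
    simp only [hf, hA]
    rw [mul_div_assoc]
    linarith [h1, h2, mul_le_mul_of_nonneg_right h3 h4]
  clear_value lam A m f
  constructor
  -- lower bound
  · have hsumM : ∑ τ : Fin n → Bool, (monoCount (kSets n k) τ : ℝ)
        ≤ ((kSets n k).card : ℝ) * 2 ^ (n - k + 1) := by
      exact_mod_cast S5.sum_monoCount_le n k (by omega)
    have hpow : ((2:ℝ) ^ (n - k + 1 : ℕ)) = 2 ^ n * (2:ℝ) ^ ((1:ℤ) - k) := by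
      rw [S5.two_zpow_eq hk]
      rw [eq_comm, mul_comm, inv_mul_eq_iff_eq_mul₀ (by positivity), ← pow_add]
      congr 1
      omega
    have hsumf : (2:ℝ) ^ n * A ≤ ∑ τ : Fin n → Bool, f τ := by
      simp only [hf]
      rw [Finset.sum_sub_distrib, Finset.sum_const, nsmul_eq_mul, mul_one, hcard]
      have h5 : ∑ τ : Fin n → Bool,
          lam * (monoCount (kSets n k) τ : ℝ) / ((kSets n k).card : ℝ)
          = lam * (∑ τ : Fin n → Bool, (monoCount (kSets n k) τ : ℝ)) /
              ((kSets n k).card : ℝ) := by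
        rw [← Finset.sum_div, ← Finset.mul_sum]
      rw [h5]
      have h6 : lam * (∑ τ : Fin n → Bool, (monoCount (kSets n k) τ : ℝ)) /
          ((kSets n k).card : ℝ) ≤ lam * (2:ℝ) ^ (n - k + 1 : ℕ) := by
        rw [div_le_iff₀ hNR]
        have h7 := mul_le_mul_of_nonneg_left hsumM hlam0
        linarith [h7]
      rw [hpow] at h6
      simp only [hA]
      linarith [h6]
    obtain ⟨m', hm'⟩ : ∃ m', m = m' + 1 := ⟨m - 1, by omega⟩
    have hpm := pow_sum_div_card_le_sum_pow (s := (Finset.univ : Finset (Fin n → Bool)))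
      (f := f) (fun τ _ => hf0 τ) m'
    rw [hcard] at hpm
    have hbase : (0:ℝ) ≤ 2 ^ n * A := by positivity
    have hkey : ((2:ℝ) ^ n * A) ^ (m' + 1) = ((2:ℝ) ^ n) ^ m' * (2 ^ n * A ^ (m' + 1)) := by
      rw [mul_pow, pow_succ]
      ring
    have hc1 : ((2:ℝ) ^ n * A) ^ (m' + 1) ≤ (∑ τ : Fin n → Bool, f τ) ^ (m' + 1) :=
      pow_le_pow_left₀ hbase hsumf _
    have hc2 : (2:ℝ) ^ n * A ^ (m' + 1) ≤ ∑ τ : Fin n → Bool, f τ ^ (m' + 1) := by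
      have hpos : (0:ℝ) < ((2:ℝ) ^ n) ^ m' := by positivity
      calc (2:ℝ) ^ n * A ^ (m' + 1)
          = ((2:ℝ) ^ n * A) ^ (m' + 1) / ((2:ℝ) ^ n) ^ m' := by
            rw [hkey]; field_simp
        _ ≤ (∑ τ : Fin n → Bool, f τ) ^ (m' + 1) / ((2:ℝ) ^ n) ^ m' :=
            (div_le_div_iff_of_pos_right hpos).mpr hc1
        _ ≤ ∑ τ : Fin n → Bool, f τ ^ (m' + 1) := hpm
    rw [hid, hm']
    have hApow : (0:ℝ) ≤ 2 ^ n * A ^ (m' + 1) := by positivity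
    linarith
  · rw [hid]
    have hfub2 : ∀ τ : Fin n → Bool, f τ ^ m ≤ (A + 2 * k ^ 2 / n) ^ m :=
      fun τ => pow_le_pow_left₀ (hf0 τ) (hfub τ) m
    have hkk : (0:ℝ) ≤ 2 * (k:ℝ) ^ 2 / n := by positivity
    have hA0 : (0:ℝ) ≤ A := by linarith
    have hE : (A + 2 * k ^ 2 / n) ^ m ≤ A ^ m * Real.exp ((d+1)*3*k^2) := by
      have hx := Real.add_one_le_exp (8/3*((k:ℝ)^2/n))
      have h2 : 2*(k:ℝ)^2/n ≤ A * (8/3*((k:ℝ)^2/n)) := by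
        have hq : (0:ℝ) ≤ (k:ℝ)^2/n := by positivity
        calc 2*(k:ℝ)^2/n = 2*((k:ℝ)^2/n) := by ring
          _ ≤ (8*A/3)*((k:ℝ)^2/n) := mul_le_mul_of_nonneg_right (by linarith) hq
          _ = A*(8/3*((k:ℝ)^2/n)) := by ring
      have h1 : A + 2 * k ^ 2 / n ≤ A * Real.exp (8/3*((k:ℝ)^2/n)) := by
        calc A + 2 * (k:ℝ) ^ 2 / n ≤ A + A*(8/3*((k:ℝ)^2/n)) := by linarith
          _ = A * (8/3*((k:ℝ)^2/n) + 1) := by ring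
          _ ≤ A * Real.exp (8/3*((k:ℝ)^2/n)) := mul_le_mul_of_nonneg_left hx hA0
      have h0 : (0:ℝ) ≤ A + 2 * k ^ 2 / n := by linarith
      calc (A + 2 * k ^ 2 / n) ^ m ≤ (A * Real.exp (8/3*((k:ℝ)^2/n))) ^ m :=
            pow_le_pow_left₀ h0 h1 m
        _ = A ^ m * Real.exp (8/3*((k:ℝ)^2/n)) ^ m := mul_pow _ _ _
        _ = A ^ m * Real.exp (m * (8/3*((k:ℝ)^2/n))) := by rw [← Real.exp_nat_mul]
        _ ≤ A ^ m * Real.exp ((d+1)*3*k^2) := by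
            refine mul_le_mul_of_nonneg_left ?_ (pow_nonneg hA0 m)
            refine Real.exp_le_exp.mpr ?_
            have hstep : (m:ℝ) * (8/3*((k:ℝ)^2/n)) ≤ ((d+1)*n) * (8/3*((k:ℝ)^2/n)) :=
              mul_le_mul_of_nonneg_right hmle (by positivity)
            have heq : ((d+1)*(n:ℝ)) * (8/3*((k:ℝ)^2/n)) = (d+1)*(8/3)*(k:ℝ)^2 := by
              field_simp
            nlinarith [sq_nonneg (k:ℝ)]
    have h2n : (0:ℝ) ≤ 2 ^ n := by positivity
    have hAm : (0:ℝ) ≤ A ^ m := pow_nonneg hA0 m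
    calc ∑ τ : Fin n → Bool, f τ ^ m
        ≤ ∑ τ : Fin n → Bool, (A + 2 * k ^ 2 / n) ^ m :=
          Finset.sum_le_sum fun τ _ => hfub2 τ
      _ = 2 ^ n * (A + 2 * k ^ 2 / n) ^ m := by
          rw [Finset.sum_const, nsmul_eq_mul, hcard]
      _ ≤ 2 ^ n * (A ^ m * Real.exp ((d+1)*3*k^2)) :=
          mul_le_mul_of_nonneg_left hE h2n
      _ ≤ (Real.exp ((d+1)*3*k^2) + 1) * 2 ^ n * A ^ m := by
          nlinarith [mul_nonneg h2n hAm]
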